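/- For all a, M, ξ > 0, the function u_ξ(t) = √(2t - at²) · cos((ξ/2) · log(Mt/(2 - at))) satisfies the ODE -u'' = (1 + ξ²) · (2t - at²)^{-2} · u on the interval (2/(M e^{π/ξ} + a), 2/(M + a)). -/

import Mathlib

open Real Set

private lemma theta_deriv (a M ξ t : ℝ) (hM : 0 < M) (ht : 0 < t) (h2 : 0 < 2 - a * t) :
    HasDerivAt (fun t : ℝ => ξ / 2 * Real.log (M * t / (2 - a * t)))
      (ξ / (2 * t - a * t ^ 2)) t := by
  have hp : 0 < 2 * t - a * t ^ 2 := by nlinarith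
  have hinner : HasDerivAt (fun t : ℝ => M * t / (2 - a * t))
      ((M * (2 - a * t) - M * t * (0 - a * 1)) / (2 - a * t) ^ 2) t := by
    exact (((hasDerivAt_id t).const_mul M).div
      ((hasDerivAt_const t (2:ℝ)).sub ((hasDerivAt_id t).const_mul a)) (ne_of_gt h2)).congr_deriv
      (by simp only [id, mul_one, Pi.sub_apply])
  have hne : M * t / (2 - a * t) ≠ 0 := by positivity
  have := (hinner.log hne).const_mul (ξ / 2)
  refine this.congr_deriv (Eq.symm ?_)
  field_simp
  ring

private lemma sqrt_deriv (a t : ℝ) (ht : 0 < t) (h2 : 0 < 2 - a * t) :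
    HasDerivAt (fun t : ℝ => Real.sqrt (2 * t - a * t ^ 2))
      ((2 - 2 * a * t) / (2 * Real.sqrt (2 * t - a * t ^ 2))) t := by
  have hp : 0 < 2 * t - a * t ^ 2 := by nlinarith
  have hpd : HasDerivAt (fun t : ℝ => 2 * t - a * t ^ 2) (2 - 2 * a * t) t := by
    have := ((hasDerivAt_id t).const_mul (2:ℝ)).sub ((hasDerivAt_pow 2 t).const_mul a)
    refine this.congr_deriv (Eq.symm ?_)
    simp; ring
  exact hpd.sqrt (ne_of_gt hp)

private lemma first_deriv (a M ξ t : ℝ) (hM : 0 < M) (ht : 0 < t) (h2 : 0 < 2 - a * t) :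
    HasDerivAt (fun t : ℝ =>
        Real.sqrt (2 * t - a * t ^ 2) * Real.cos (ξ / 2 * Real.log (M * t / (2 - a * t))))
      (((2 - 2 * a * t) * Real.cos (ξ / 2 * Real.log (M * t / (2 - a * t)))
        - 2 * ξ * Real.sin (ξ / 2 * Real.log (M * t / (2 - a * t))))
        / (2 * Real.sqrt (2 * t - a * t ^ 2))) t := by
  have hp : 0 < 2 * t - a * t ^ 2 := by nlinarith
  have hs : 0 < Real.sqrt (2 * t - a * t ^ 2) := Real.sqrt_pos.mpr hp
  have hsq : Real.sqrt (2 * t - a * t ^ 2) * Real.sqrt (2 * t - a * t ^ 2)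
      = 2 * t - a * t ^ 2 := Real.mul_self_sqrt hp.le
  have hcos := (theta_deriv a M ξ t hM ht h2).cos
  have := (sqrt_deriv a t ht h2).mul hcos
  refine this.congr_deriv (Eq.symm ?_)
  set s := Real.sqrt (2 * t - a * t ^ 2) with hsdef
  have hs2 : s ^ 2 = 2 * t - a * t ^ 2 := Real.sq_sqrt hp.le
  rw [← hs2]
  field_simp
  ring

private lemma second_deriv (a M ξ t : ℝ) (hM : 0 < M) (ht : 0 < t) (h2 : 0 < 2 - a * t) :
    HasDerivAt (fun t : ℝ =>
        ((2 - 2 * a * t) * Real.cos (ξ / 2 * Real.log (M * t / (2 - a * t)))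
          - 2 * ξ * Real.sin (ξ / 2 * Real.log (M * t / (2 - a * t))))
          / (2 * Real.sqrt (2 * t - a * t ^ 2)))
      (-((1 + ξ ^ 2) * ((2 * t - a * t ^ 2) ^ 2)⁻¹ *
          (Real.sqrt (2 * t - a * t ^ 2) *
            Real.cos (ξ / 2 * Real.log (M * t / (2 - a * t)))))) t := by
  have hp : 0 < 2 * t - a * t ^ 2 := by nlinarith
  have hs : 0 < Real.sqrt (2 * t - a * t ^ 2) := Real.sqrt_pos.mpr hp
  have hθ := theta_deriv a M ξ t hM ht h2
  have h1 : HasDerivAt (fun t : ℝ => 2 - 2 * a * t) (-(2 * a)) t := by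
    have := (hasDerivAt_const t (2:ℝ)).sub ((hasDerivAt_id t).const_mul (2 * a))
    refine this.congr_deriv (Eq.symm ?_)
    ring
  have hN := (h1.mul hθ.cos).sub (hθ.sin.const_mul (2 * ξ))
  have hD := (sqrt_deriv a t ht h2).const_mul (2:ℝ)
  have hg := hN.div hD (by positivity)
  refine hg.congr_deriv (Eq.symm ?_)
  simp only [Pi.mul_apply, Pi.sub_apply]
  set s := Real.sqrt (2 * t - a * t ^ 2) with hsdef
  have hs2 : s ^ 2 = 2 * t - a * t ^ 2 := Real.sq_sqrt hp.le
  rw [← hs2]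
  field_simp
  linear_combination (a *
    Real.cos (ξ * Real.log (M * t / (2 - t * a)) / 2)) * hs2

theorem generalized_eigenfunction_ode (a M ξ : ℝ) (ha : 0 < a) (hM : 0 < M) (hξ : 0 < ξ) :
    ∀ t ∈ Ioo (2 / (M * Real.exp (π / ξ) + a)) (2 / (M + a)),
      deriv (deriv (fun t : ℝ =>
          Real.sqrt (2 * t - a * t ^ 2) *
            Real.cos (ξ / 2 * Real.log (M * t / (2 - a * t))))) t =
        -((1 + ξ ^ 2) * ((2 * t - a * t ^ 2) ^ 2)⁻¹ *
          (Real.sqrt (2 * t - a * t ^ 2) *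
            Real.cos (ξ / 2 * Real.log (M * t / (2 - a * t))))) := by
  intro t ht
  obtain ⟨ht1, ht2⟩ := ht
  have hE : 0 < M * Real.exp (π / ξ) + a := by positivity
  have htpos : 0 < t := lt_trans (by positivity) ht1
  have hta : t < 2 / a := lt_of_lt_of_le ht2 (by
    apply div_le_div_of_nonneg_left (by norm_num) ha
    linarith)
  have h2a : 0 < 2 - a * t := by
    have := (lt_div_iff₀ ha).mp hta
    nlinarith
  have hmem : t ∈ Ioo (0:ℝ) (2 / a) := ⟨htpos, hta⟩
  have hev : deriv (fun t : ℝ =>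
      Real.sqrt (2 * t - a * t ^ 2) *
        Real.cos (ξ / 2 * Real.log (M * t / (2 - a * t)))) =ᶠ[nhds t]
      (fun t : ℝ =>
        ((2 - 2 * a * t) * Real.cos (ξ / 2 * Real.log (M * t / (2 - a * t)))
          - 2 * ξ * Real.sin (ξ / 2 * Real.log (M * t / (2 - a * t))))
          / (2 * Real.sqrt (2 * t - a * t ^ 2))) := by
    filter_upwards [Ioo_mem_nhds htpos hta] with x hx
    have hx2 : 0 < 2 - a * x := by
      have := (lt_div_iff₀ ha).mp hx.2
      nlinarith
    exact (first_deriv a M ξ x hM hx.1 hx2).deriv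
  rw [hev.deriv_eq, (second_deriv a M ξ t hM htpos h2a).deriv]
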